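/- For every admissible distance sequence (m_1, …, m_k), the lattice Q(m) is isometric to W_k; that is, there is a group isomorphism Q(m) → W_k preserving the bilinear forms. -/

import Mathlib

open Finset


/-- Admissible distance sequences: the sequences of vertex distances between
consecutive leaves of marked admissible trees with `2 k` vertices. -/
inductive AdmSeq : List ℤ → Prop
  | base : AdmSeq [2]
  | left (a : ℤ) (l : List ℤ) : AdmSeq (a :: l) → AdmSeq (3 :: (a + 1) :: l)
  | right (l : List ℤ) (a : ℤ) : AdmSeq (l ++ [a]) → AdmSeq (l ++ [a + 1, 3])
  | mid (l₁ : List ℤ) (a b : ℤ) (l₂ : List ℤ) :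
      AdmSeq (l₁ ++ a :: b :: l₂) → AdmSeq (l₁ ++ (a + 1) :: 3 :: (b + 1) :: l₂)

/-- The bilinear form of the lattice `Q(m)`: `qᵢ·qᵢ = mᵢ - 2`, `qᵢ·qᵢ₊₁ = 1`,
and `qᵢ·qⱼ = 0` for `|i - j| ≥ 2`. -/
def QForm (m : List ℤ) (x y : Fin m.length → ℤ) : ℤ :=
  ∑ i, ∑ j,
    (if i = j then m.get i - 2
      else if (i : ℕ) + 1 = (j : ℕ) ∨ (j : ℕ) + 1 = (i : ℕ) then 1 else 0) * x i * y j

/-- The bilinear form of the lattice `W k = ⟨v₁,…,v_{k-1}⟩ ⊕ ⟨w⟩` with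
`vᵢ·vⱼ = δᵢⱼ`, `vᵢ·w = 0`, `w·w = 0` (the last coordinate being `w`). -/
def WForm (k : ℕ) (x y : Fin k → ℤ) : ℤ :=
  ∑ i : Fin k, if (i : ℕ) < k - 1 then x i * y i else 0

def QIW.ext {n : ℕ} (x : Fin n → ℤ) : ℕ → ℤ := fun j => if h : j < n then x ⟨j, h⟩ else 0

def QIW.Dl (m : List ℤ) : ℕ → ℤ := fun j => if h : j < m.length then m.get ⟨j, h⟩ - 2 else 0

def QIW.Qf (n : ℕ) (D X Y : ℕ → ℤ) : ℤ :=
  (∑ i ∈ range n, D i * X i * Y i)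
    + ∑ i ∈ range (n - 1), (X i * Y (i + 1) + X (i + 1) * Y i)

def QIW.Wf (k : ℕ) (X Y : ℕ → ℤ) : ℤ := ∑ i ∈ range (k - 1), X i * Y i

namespace QIW

lemma ext_lt {n : ℕ} (x : Fin n → ℤ) {j : ℕ} (h : j < n) : ext x j = x ⟨j, h⟩ := dif_pos h

lemma ext_ge {n : ℕ} (x : Fin n → ℤ) {j : ℕ} (h : n ≤ j) : ext x j = 0 := dif_neg (by omega)

lemma sum_range_if (k j : ℕ) (h : j ≤ k) (f : ℕ → ℤ) :
    ∑ i ∈ range k, (if i < j then f i else 0) = ∑ i ∈ range j, f i := by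
  rw [Finset.sum_ite, Finset.sum_const_zero, add_zero]
  apply Finset.sum_congr
  · ext i; simp; omega
  · intros; rfl

lemma WForm_eq (k : ℕ) (x y : Fin k → ℤ) : WForm k x y = Wf k (ext x) (ext y) := by
  unfold WForm Wf
  rw [← sum_range_if k (k - 1) (by omega),
    ← Fin.sum_univ_eq_sum_range (fun i => if i < k - 1 then ext x i * ext y i else 0) k]
  apply Finset.sum_congr rfl
  intro i _
  by_cases h : (i : ℕ) < k - 1
  · rw [if_pos h, if_pos h, ext_lt x i.isLt, ext_lt y i.isLt]
  · rw [if_neg h, if_neg h]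

lemma QForm_eq (m : List ℤ) (x y : Fin m.length → ℤ) :
    QForm m x y = Qf m.length (Dl m) (ext x) (ext y) := by
  unfold QForm Qf
  have key : ∀ i j : Fin m.length,
      (if i = j then m.get i - 2
        else if (i : ℕ) + 1 = (j : ℕ) ∨ (j : ℕ) + 1 = (i : ℕ) then 1 else 0) * x i * y j
      = (if i = j then (m.get i - 2) * x i * y j else 0)
        + (if (i : ℕ) + 1 = (j : ℕ) then x i * y j else 0)
        + (if (j : ℕ) + 1 = (i : ℕ) then x i * y j else 0) := by
    intro i j
    rcases eq_or_ne i j with h | h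
    · subst h
      have h2 : ¬((i : ℕ) + 1 = (i : ℕ)) := by omega
      rw [if_pos rfl, if_pos rfl, if_neg h2]
      ring
    · have hv : (i : ℕ) ≠ (j : ℕ) := fun hc => h (Fin.ext hc)
      rw [if_neg h, if_neg h]
      by_cases h1 : (i : ℕ) + 1 = (j : ℕ)
      · rw [if_pos (Or.inl h1), if_pos h1, if_neg (by omega)]
        ring
      · by_cases h2 : (j : ℕ) + 1 = (i : ℕ)
        · rw [if_pos (Or.inr h2), if_neg h1, if_pos h2]
          ring
        · rw [if_neg (by tauto), if_neg h1, if_neg h2]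
          ring
  simp only [key, Finset.sum_add_distrib]
  have S1 : ∀ i : Fin m.length,
      (∑ j : Fin m.length, if i = j then (m.get i - 2) * x i * y j else 0)
      = (m.get i - 2) * x i * y i := by
    intro i; rw [Finset.sum_ite_eq]; simp
  have S2 : ∀ i : Fin m.length,
      (∑ j : Fin m.length, if (i : ℕ) + 1 = (j : ℕ) then x i * y j else 0)
      = if h : (i : ℕ) + 1 < m.length then x i * y ⟨(i : ℕ) + 1, h⟩ else 0 := by
    intro i
    by_cases h : (i : ℕ) + 1 < m.length
    · rw [dif_pos h, Finset.sum_eq_single (⟨(i : ℕ) + 1, h⟩ : Fin m.length)]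
      · rw [if_pos rfl]
      · intro b _ hb
        rw [if_neg (fun hc => hb (Fin.ext hc.symm))]
      · intro hc; exact absurd (Finset.mem_univ _) hc
    · rw [dif_neg h]
      apply Finset.sum_eq_zero
      intro b _
      rw [if_neg (by have := b.isLt; omega)]
  have S3 : (∑ i : Fin m.length, ∑ j : Fin m.length,
        if (j : ℕ) + 1 = (i : ℕ) then x i * y j else 0)
      = ∑ j : Fin m.length, if h : (j : ℕ) + 1 < m.length then x ⟨(j : ℕ) + 1, h⟩ * y j else 0 := by
    rw [Finset.sum_comm]
    apply Finset.sum_congr rfl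
    intro j _
    by_cases h : (j : ℕ) + 1 < m.length
    · rw [dif_pos h, Finset.sum_eq_single (⟨(j : ℕ) + 1, h⟩ : Fin m.length)]
      · rw [if_pos rfl]
      · intro b _ hb
        rw [if_neg (fun hc => hb (Fin.ext hc.symm))]
      · intro hc; exact absurd (Finset.mem_univ _) hc
    · rw [dif_neg h]
      apply Finset.sum_eq_zero
      intro b _
      rw [if_neg (by have := b.isLt; omega)]
  rw [Finset.sum_congr rfl (fun i _ => S1 i), Finset.sum_congr rfl (fun i _ => S2 i), S3]
  have T1 : (∑ i : Fin m.length, (m.get i - 2) * x i * y i)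
      = ∑ i ∈ range m.length, Dl m i * ext x i * ext y i := by
    rw [← Fin.sum_univ_eq_sum_range (fun i => Dl m i * ext x i * ext y i) m.length]
    apply Finset.sum_congr rfl
    intro i _
    rw [ext_lt x i.isLt, ext_lt y i.isLt]
    unfold Dl
    rw [dif_pos i.isLt]
  have T2 : (∑ i : Fin m.length, if h : (i : ℕ) + 1 < m.length then x i * y ⟨(i : ℕ) + 1, h⟩ else 0)
      = ∑ i ∈ range (m.length - 1), ext x i * ext y (i + 1) := by
    rw [← sum_range_if m.length (m.length - 1) (by omega),
      ← Fin.sum_univ_eq_sum_range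
        (fun i => if i < m.length - 1 then ext x i * ext y (i + 1) else 0) m.length]
    apply Finset.sum_congr rfl
    intro i _
    by_cases h : (i : ℕ) + 1 < m.length
    · rw [dif_pos h, if_pos (by omega), ext_lt x i.isLt, ext_lt y h]
    · rw [dif_neg h, if_neg (by omega)]
  have T3 : (∑ j : Fin m.length, if h : (j : ℕ) + 1 < m.length then x ⟨(j : ℕ) + 1, h⟩ * y j else 0)
      = ∑ i ∈ range (m.length - 1), ext x (i + 1) * ext y i := by
    rw [← sum_range_if m.length (m.length - 1) (by omega),
      ← Fin.sum_univ_eq_sum_range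
        (fun i => if i < m.length - 1 then ext x (i + 1) * ext y i else 0) m.length]
    apply Finset.sum_congr rfl
    intro i _
    by_cases h : (i : ℕ) + 1 < m.length
    · rw [dif_pos h, if_pos (by omega), ext_lt x h, ext_lt y i.isLt]
    · rw [dif_neg h, if_neg (by omega)]
  rw [T1, T2, T3]
  ring


lemma split1mid (f : ℕ → ℤ) (a b : ℕ) :
    ∑ i ∈ range (a + 1 + b), f i
      = (∑ i ∈ range a, f i) + f a + ∑ i ∈ range b, f (a + 1 + i) := by
  rw [show a + 1 + b = a + (1 + b) by omega, Finset.sum_range_add,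
    Finset.sum_range_add (fun i => f (a + i)) 1 b]
  have e : ∀ i ∈ range b, f (a + (1 + i)) = f (a + 1 + i) := fun i _ => by
    rw [show a + (1 + i) = a + 1 + i by omega]
  rw [Finset.sum_congr rfl e]
  simp [Finset.sum_range_succ]
  ring

lemma split2mid (f : ℕ → ℤ) (a b : ℕ) :
    ∑ i ∈ range (a + 2 + b), f i
      = (∑ i ∈ range a, f i) + f a + f (a + 1) + ∑ i ∈ range b, f (a + 2 + i) := by
  rw [show a + 2 + b = a + (2 + b) by omega, Finset.sum_range_add,
    Finset.sum_range_add (fun i => f (a + i)) 2 b]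
  have e : ∀ i ∈ range b, f (a + (2 + i)) = f (a + 2 + i) := fun i _ => by
    rw [show a + (2 + i) = a + 2 + i by omega]
  rw [Finset.sum_congr rfl e]
  simp [Finset.sum_range_succ, show a + (0+1) = a + 1 from rfl]
  ring

lemma split3mid (f : ℕ → ℤ) (a b : ℕ) :
    ∑ i ∈ range (a + 3 + b), f i
      = (∑ i ∈ range a, f i) + f a + f (a + 1) + f (a + 2) + ∑ i ∈ range b, f (a + 3 + i) := by
  rw [show a + 3 + b = a + (3 + b) by omega, Finset.sum_range_add,
    Finset.sum_range_add (fun i => f (a + i)) 3 b]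
  have e : ∀ i ∈ range b, f (a + (3 + i)) = f (a + 3 + i) := fun i _ => by
    rw [show a + (3 + i) = a + 3 + i by omega]
  rw [Finset.sum_congr rfl e]
  simp [Finset.sum_range_succ, show a + (0+1) = a + 1 from rfl, show a + (0+1+1) = a + 2 from rfl]
  ring

lemma step (n t : ℕ) (hn : 1 ≤ n) (ht : t ≤ n) (d d' X X' : ℕ → ℤ)
    (h1 : d' t = 1)
    (h2 : ∀ j, j + 1 < t → d' j = d j)
    (h3 : 0 < t → d' (t - 1) = d (t - 1) + 1)
    (h4 : t < n → d' (t + 1) = d t + 1)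
    (h5 : ∀ j, t + 1 < j → j < n + 1 → d' j = d (j - 1)) :
    Qf (n + 1) d' X X' =
      Qf n d (fun j => if j < t then X j else -X (j + 1))
             (fun j => if j < t then X' j else -X' (j + 1))
      + ((if t = 0 then 0 else X (t - 1)) + X t + (if t < n then X (t + 1) else 0))
      * ((if t = 0 then 0 else X' (t - 1)) + X' t + (if t < n then X' (t + 1) else 0)) := by
  rcases Nat.eq_zero_or_pos t with rfl | htpos
  · -- t = 0
    obtain ⟨s, rfl⟩ : ∃ s, n = s + 1 := ⟨n - 1, by omega⟩
    simp only [Qf, Nat.not_lt_zero, if_false, if_pos (show (0:ℕ) < s + 1 by omega),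
      if_pos rfl, Nat.add_sub_cancel]
    have E1 : ∑ i ∈ range (s + 1 + 1), d' i * X i * X' i
        = (∑ i ∈ range s, d (i + 1) * X (i + 2) * X' (i + 2))
          + (d 0 + 1) * X 1 * X' 1 + X 0 * X' 0 := by
      rw [Finset.sum_range_succ' (fun i => d' i * X i * X' i) (s + 1), h1,
        Finset.sum_range_succ' (fun i => d' (i + 1) * X (i + 1) * X' (i + 1)) s,
        ← h4 (by omega)]
      have e : ∀ i ∈ range s, d' (i + 1 + 1) * X (i + 1 + 1) * X' (i + 1 + 1)
          = d (i + 1) * X (i + 2) * X' (i + 2) := by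
        intro i hi
        simp only [mem_range] at hi
        rw [h5 (i + 2) (by omega) (by omega)]
        norm_num
      rw [Finset.sum_congr rfl e]
      simp only [zero_add]
      ring
    have E2 : ∑ i ∈ range (s + 1), d i * -X (i + 1) * -X' (i + 1)
        = (∑ i ∈ range s, d (i + 1) * X (i + 2) * X' (i + 2)) + d 0 * X 1 * X' 1 := by
      rw [Finset.sum_range_succ' (fun i => d i * -X (i + 1) * -X' (i + 1)) s]
      have e : ∀ i ∈ range s, d (i + 1) * -X (i + 1 + 1) * -X' (i + 1 + 1)
          = d (i + 1) * X (i + 2) * X' (i + 2) := by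
        intro i _; ring
      rw [Finset.sum_congr rfl e]
      simp only [zero_add]
      ring
    have E3 : ∑ i ∈ range (s + 1), (X i * X' (i + 1) + X (i + 1) * X' i)
        = (∑ i ∈ range s, (X (i + 1) * X' (i + 2) + X (i + 2) * X' (i + 1)))
          + (X 0 * X' 1 + X 1 * X' 0) := by
      rw [Finset.sum_range_succ' (fun i => X i * X' (i + 1) + X (i + 1) * X' i) s]
    have E4 : ∑ i ∈ range s, (-X (i + 1) * -X' (i + 1 + 1) + -X (i + 1 + 1) * -X' (i + 1))
        = ∑ i ∈ range s, (X (i + 1) * X' (i + 2) + X (i + 2) * X' (i + 1)) := by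
      apply Finset.sum_congr rfl
      intro i _; ring
    rw [E1, E3, E2, E4]
    simp only [if_true, zero_add]
    ring
  · -- 0 < t
    obtain ⟨t'', rfl⟩ : ∃ t'', t = t'' + 1 := ⟨t - 1, by omega⟩
    have h3' : d' t'' = d t'' + 1 := by
      have := h3 (by omega)
      rwa [Nat.add_sub_cancel] at this
    by_cases hs : t'' + 1 = n
    · -- t = n
      subst hs
      simp only [Qf, Nat.add_sub_cancel,
        if_neg (show ¬(t'' + 1 = 0) by omega), if_neg (show ¬(t'' + 1 < t'' + 1) by omega),
        add_zero]
      have F1 : ∑ i ∈ range (t'' + 1 + 1), d' i * X i * X' i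
          = (∑ i ∈ range t'', d i * X i * X' i) + (d t'' + 1) * X t'' * X' t''
            + X (t'' + 1) * X' (t'' + 1) := by
        rw [Finset.sum_range_succ, Finset.sum_range_succ, h1, h3']
        have e : ∀ i ∈ range t'', d' i * X i * X' i = d i * X i * X' i := by
          intro i hi
          simp only [mem_range] at hi
          rw [h2 i (by omega)]
        rw [Finset.sum_congr rfl e]
        ring
      have F2 : ∑ i ∈ range (t'' + 1),
            d i * (if i < t'' + 1 then X i else -X (i + 1))
              * (if i < t'' + 1 then X' i else -X' (i + 1))
          = (∑ i ∈ range t'', d i * X i * X' i) + d t'' * X t'' * X' t'' := by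
        have e : ∀ i ∈ range (t'' + 1),
            d i * (if i < t'' + 1 then X i else -X (i + 1))
              * (if i < t'' + 1 then X' i else -X' (i + 1)) = d i * X i * X' i := by
          intro i hi
          simp only [mem_range] at hi
          have c1 : i < t'' + 1 := by omega
          simp only [if_pos c1]
        rw [Finset.sum_congr rfl e, Finset.sum_range_succ]
      have F3 : ∑ i ∈ range t'',
            ((if i < t'' + 1 then X i else -X (i + 1)) * (if i + 1 < t'' + 1 then X' (i + 1) else -X' (i + 1 + 1))
              + (if i + 1 < t'' + 1 then X (i + 1) else -X (i + 1 + 1)) * (if i < t'' + 1 then X' i else -X' (i + 1)))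
          = ∑ i ∈ range t'', (X i * X' (i + 1) + X (i + 1) * X' i) := by
        apply Finset.sum_congr rfl
        intro i hi
        simp only [mem_range] at hi
        have c1 : i < t'' + 1 := by omega
        have c2 : i + 1 < t'' + 1 := by omega
        simp only [if_pos c1, if_pos c2]
      have F4 : ∑ i ∈ range (t'' + 1), (X i * X' (i + 1) + X (i + 1) * X' i)
          = (∑ i ∈ range t'', (X i * X' (i + 1) + X (i + 1) * X' i))
            + (X t'' * X' (t'' + 1) + X (t'' + 1) * X' t'') := by
        rw [Finset.sum_range_succ]
      rw [F1, F2, F3, F4]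
      ring
    · -- 0 < t < n
      obtain ⟨s', rfl⟩ : ∃ s', n = t'' + 2 + s' := ⟨n - t'' - 2, by omega⟩
      have h4' : d' (t'' + 2) = d (t'' + 1) + 1 := by
        have := h4 (by omega)
        rwa [show t'' + 1 + 1 = t'' + 2 by omega] at this
      simp only [Qf, if_neg (show ¬(t'' + 1 = 0) by omega),
        if_pos (show t'' + 1 < t'' + 2 + s' by omega)]
      rw [show t'' + 2 + s' + 1 - 1 = t'' + 2 + s' by omega,
        show t'' + 2 + s' + 1 = t'' + 3 + s' by omega,
        show t'' + 2 + s' - 1 = t'' + 1 + s' by omega,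
        show t'' + 1 + 1 = t'' + 2 by omega,
        show t'' + 1 - 1 = t'' by omega]
      have F1 : ∑ i ∈ range (t'' + 3 + s'), d' i * X i * X' i
          = (∑ i ∈ range t'', d i * X i * X' i) + (d t'' + 1) * X t'' * X' t''
            + X (t'' + 1) * X' (t'' + 1) + (d (t'' + 1) + 1) * X (t'' + 2) * X' (t'' + 2)
            + ∑ i ∈ range s', d (t'' + 2 + i) * X (t'' + 3 + i) * X' (t'' + 3 + i) := by
        rw [split3mid (fun i => d' i * X i * X' i) t'' s', h3',
          show t'' + 1 = t'' + 1 from rfl, h1, h4']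
        have e1 : ∀ i ∈ range t'', d' i * X i * X' i = d i * X i * X' i := by
          intro i hi
          simp only [mem_range] at hi
          rw [h2 i (by omega)]
        have e2 : ∀ i ∈ range s', d' (t'' + 3 + i) * X (t'' + 3 + i) * X' (t'' + 3 + i)
            = d (t'' + 2 + i) * X (t'' + 3 + i) * X' (t'' + 3 + i) := by
          intro i hi
          simp only [mem_range] at hi
          rw [h5 (t'' + 3 + i) (by omega) (by omega), show t'' + 3 + i - 1 = t'' + 2 + i by omega]
        rw [Finset.sum_congr rfl e1, Finset.sum_congr rfl e2]
        ring
      have F2 : ∑ i ∈ range (t'' + 2 + s'),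
            d i * (if i < t'' + 1 then X i else -X (i + 1))
              * (if i < t'' + 1 then X' i else -X' (i + 1))
          = (∑ i ∈ range t'', d i * X i * X' i) + d t'' * X t'' * X' t''
            + d (t'' + 1) * X (t'' + 2) * X' (t'' + 2)
            + ∑ i ∈ range s', d (t'' + 2 + i) * X (t'' + 3 + i) * X' (t'' + 3 + i) := by
        rw [split2mid (fun i =>
          d i * (if i < t'' + 1 then X i else -X (i + 1))
            * (if i < t'' + 1 then X' i else -X' (i + 1))) t'' s']
        have c1 : t'' < t'' + 1 := by omega
        have c2 : ¬(t'' + 1 < t'' + 1) := by omega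
        simp only [if_pos c1, if_neg c2]
        have e1 : ∀ i ∈ range t'',
            d i * (if i < t'' + 1 then X i else -X (i + 1))
              * (if i < t'' + 1 then X' i else -X' (i + 1)) = d i * X i * X' i := by
          intro i hi
          simp only [mem_range] at hi
          have c3 : i < t'' + 1 := by omega
          simp only [if_pos c3]
        have e2 : ∀ i ∈ range s',
            d (t'' + 2 + i) * (if t'' + 2 + i < t'' + 1 then X (t'' + 2 + i) else -X (t'' + 2 + i + 1))
              * (if t'' + 2 + i < t'' + 1 then X' (t'' + 2 + i) else -X' (t'' + 2 + i + 1))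
            = d (t'' + 2 + i) * X (t'' + 3 + i) * X' (t'' + 3 + i) := by
          intro i hi
          have c3 : ¬(t'' + 2 + i < t'' + 1) := by omega
          simp only [if_neg c3, show t'' + 2 + i + 1 = t'' + 3 + i by omega]
          ring
        rw [Finset.sum_congr rfl e1, Finset.sum_congr rfl e2,
          show t'' + 1 + 1 = t'' + 2 by omega]
        ring
      have F3 : ∑ i ∈ range (t'' + 2 + s'), (X i * X' (i + 1) + X (i + 1) * X' i)
          = (∑ i ∈ range t'', (X i * X' (i + 1) + X (i + 1) * X' i))
            + (X t'' * X' (t'' + 1) + X (t'' + 1) * X' t'')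
            + (X (t'' + 1) * X' (t'' + 2) + X (t'' + 2) * X' (t'' + 1))
            + ∑ i ∈ range s', (X (t'' + 2 + i) * X' (t'' + 3 + i) + X (t'' + 3 + i) * X' (t'' + 2 + i)) := by
        rw [split2mid (fun i => X i * X' (i + 1) + X (i + 1) * X' i) t'' s']
        have e : ∀ i ∈ range s',
            X (t'' + 2 + i) * X' (t'' + 2 + i + 1) + X (t'' + 2 + i + 1) * X' (t'' + 2 + i)
            = X (t'' + 2 + i) * X' (t'' + 3 + i) + X (t'' + 3 + i) * X' (t'' + 2 + i) := by
          intro i _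
          rw [show t'' + 2 + i + 1 = t'' + 3 + i by omega]
        rw [Finset.sum_congr rfl e, show t'' + 1 + 1 = t'' + 2 by omega]
      have F4 : ∑ i ∈ range (t'' + 1 + s'),
            ((if i < t'' + 1 then X i else -X (i + 1)) * (if i + 1 < t'' + 1 then X' (i + 1) else -X' (i + 1 + 1))
              + (if i + 1 < t'' + 1 then X (i + 1) else -X (i + 1 + 1)) * (if i < t'' + 1 then X' i else -X' (i + 1)))
          = (∑ i ∈ range t'', (X i * X' (i + 1) + X (i + 1) * X' i))
            + (-(X t'' * X' (t'' + 2)) - X (t'' + 2) * X' t'')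
            + ∑ i ∈ range s', (X (t'' + 2 + i) * X' (t'' + 3 + i) + X (t'' + 3 + i) * X' (t'' + 2 + i)) := by
        rw [split1mid (fun i =>
          (if i < t'' + 1 then X i else -X (i + 1)) * (if i + 1 < t'' + 1 then X' (i + 1) else -X' (i + 1 + 1))
            + (if i + 1 < t'' + 1 then X (i + 1) else -X (i + 1 + 1)) * (if i < t'' + 1 then X' i else -X' (i + 1))) t'' s']
        have c1 : t'' < t'' + 1 := by omega
        have c2 : ¬(t'' + 1 < t'' + 1) := by omega
        simp only [if_pos c1, if_neg c2]
        have e1 : ∀ i ∈ range t'',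
            (if i < t'' + 1 then X i else -X (i + 1)) * (if i + 1 < t'' + 1 then X' (i + 1) else -X' (i + 1 + 1))
              + (if i + 1 < t'' + 1 then X (i + 1) else -X (i + 1 + 1)) * (if i < t'' + 1 then X' i else -X' (i + 1))
            = X i * X' (i + 1) + X (i + 1) * X' i := by
          intro i hi
          simp only [mem_range] at hi
          have c3 : i < t'' + 1 := by omega
          have c4 : i + 1 < t'' + 1 := by omega
          simp only [if_pos c3, if_pos c4]
        have e2 : ∀ i ∈ range s',
            (if t'' + 1 + i < t'' + 1 then X (t'' + 1 + i) else -X (t'' + 1 + i + 1))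
              * (if t'' + 1 + i + 1 < t'' + 1 then X' (t'' + 1 + i + 1) else -X' (t'' + 1 + i + 1 + 1))
              + (if t'' + 1 + i + 1 < t'' + 1 then X (t'' + 1 + i + 1) else -X (t'' + 1 + i + 1 + 1))
                * (if t'' + 1 + i < t'' + 1 then X' (t'' + 1 + i) else -X' (t'' + 1 + i + 1))
            = X (t'' + 2 + i) * X' (t'' + 3 + i) + X (t'' + 3 + i) * X' (t'' + 2 + i) := by
          intro i _
          have c3 : ¬(t'' + 1 + i < t'' + 1) := by omega
          have c4 : ¬(t'' + 1 + i + 1 < t'' + 1) := by omega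
          have c5 : ¬(t'' + 2 + i < t'' + 1) := by omega
          simp only [if_neg c3, if_neg c4, if_neg c5,
            show t'' + 1 + i + 1 = t'' + 2 + i from by omega,
            show t'' + 2 + i + 1 = t'' + 3 + i from by omega]
          ring
        rw [Finset.sum_congr rfl e1, Finset.sum_congr rfl e2,
          show t'' + 1 + 1 = t'' + 2 by omega]
        ring
      rw [F1, F2, F3, F4]
      ring


def shearVal (n t : ℕ) (ht : t ≤ n) (x : Fin (n + 1) → ℤ) : ℤ :=
  (if t = 0 then 0 else x ⟨t - 1, by omega⟩) + x ⟨t, by omega⟩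
    + (if h : t < n then x ⟨t + 1, by omega⟩ else 0)

def shearF (n t : ℕ) (ht : t ≤ n) (x : Fin (n + 1) → ℤ) : Fin (n + 1) → ℤ :=
  Function.update x ⟨t, by omega⟩ (shearVal n t ht x)

def shearInv (n t : ℕ) (ht : t ≤ n) (x : Fin (n + 1) → ℤ) : Fin (n + 1) → ℤ :=
  Function.update x ⟨t, by omega⟩
    (x ⟨t, by omega⟩ - (if t = 0 then 0 else x ⟨t - 1, by omega⟩)
      - (if h : t < n then x ⟨t + 1, by omega⟩ else 0))

def shearE (n t : ℕ) (ht : t ≤ n) : (Fin (n + 1) → ℤ) ≃+ (Fin (n + 1) → ℤ) :=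
  AddEquiv.mk' ⟨shearF n t ht, shearInv n t ht, by
    intro x
    funext j
    obtain ⟨jv, hjv⟩ := j
    simp only [shearF, shearInv, shearVal, Function.update_apply, Fin.mk.injEq]
    split_ifs <;> (try subst_vars) <;> first | rfl | ring1 | omega | (exfalso; omega)
    , by
    intro x
    funext j
    obtain ⟨jv, hjv⟩ := j
    simp only [shearF, shearInv, shearVal, Function.update_apply, Fin.mk.injEq]
    split_ifs <;> (try subst_vars) <;> first | rfl | ring1 | omega | (exfalso; omega)⟩
    (by
      intro x y
      funext j
      obtain ⟨jv, hjv⟩ := j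
      simp only [Equiv.coe_fn_mk, shearF, shearVal, Function.update_apply, Fin.mk.injEq,
        Pi.add_apply]
      split_ifs <;> ring1)

def negAfter (n t : ℕ) : (Fin n → ℤ) ≃+ (Fin n → ℤ) :=
  AddEquiv.mk' ⟨fun x j => if (j : ℕ) < t then x j else -x j,
    fun x j => if (j : ℕ) < t then x j else -x j, by
      intro x; funext j; by_cases h : (j : ℕ) < t <;> simp [h], by
      intro x; funext j; by_cases h : (j : ℕ) < t <;> simp [h]⟩
    (by intro x y; funext j; by_cases h : (j : ℕ) < t <;> simp [h] <;> ring)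

def splitE (n : ℕ) (p : Fin (n + 1)) : (Fin (n + 1) → ℤ) ≃+ (ℤ × (Fin n → ℤ)) :=
  AddEquiv.mk' (Fin.insertNthEquiv (fun _ => ℤ) p).symm (fun x y => rfl)

def phiE (n t : ℕ) (ht : t ≤ n) : (Fin (n + 1) → ℤ) ≃+ ((Fin n → ℤ) × ℤ) :=
  ((shearE n t ht).trans
    ((splitE n ⟨t, by omega⟩).trans
      (AddEquiv.prodCongr (AddEquiv.refl ℤ) (negAfter n t)))).trans AddEquiv.prodComm

def psiE (n : ℕ) (hn : 1 ≤ n) : ((Fin n → ℤ) × ℤ) ≃+ (Fin (n + 1) → ℤ) :=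
  AddEquiv.prodComm.trans (splitE n ⟨n - 1, by omega⟩).symm


lemma phiE_fst_apply (n t : ℕ) (ht : t ≤ n) (x : Fin (n + 1) → ℤ) (j : Fin n) :
    (phiE n t ht x).1 j = if (j : ℕ) < t then x j.castSucc else -x j.succ := by
  have h0 : (phiE n t ht x).1 j
      = if (j : ℕ) < t then (shearF n t ht x) (Fin.succAbove ⟨t, by omega⟩ j)
        else -(shearF n t ht x) (Fin.succAbove ⟨t, by omega⟩ j) := rfl
  rw [h0]
  have hne : Fin.succAbove (⟨t, by omega⟩ : Fin (n + 1)) j ≠ ⟨t, by omega⟩ :=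
    Fin.succAbove_ne _ j
  rw [shearF, Function.update_of_ne hne]
  by_cases h : (j : ℕ) < t
  · rw [if_pos h, if_pos h, Fin.succAbove_of_castSucc_lt _ _ (by simp [Fin.lt_def]; omega)]
  · rw [if_neg h, if_neg h, Fin.succAbove_of_le_castSucc _ _ (by simp [Fin.le_def]; omega)]

lemma phi_fst_ext (n t : ℕ) (ht : t ≤ n) (x : Fin (n + 1) → ℤ) :
    ext ((phiE n t ht x).1) = fun j => if j < t then ext x j else -ext x (j + 1) := by
  funext j
  by_cases hj : j < n
  · rw [ext_lt _ hj, phiE_fst_apply]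
    by_cases h : j < t
    · rw [if_pos (show ((⟨j, hj⟩ : Fin n) : ℕ) < t from h), if_pos h,
        ext_lt x (show j < n + 1 by omega)]
      congr 1
    · rw [if_neg (show ¬((⟨j, hj⟩ : Fin n) : ℕ) < t from h), if_neg h,
        ext_lt x (show j + 1 < n + 1 by omega)]
      congr 1
  · rw [ext_ge _ (by omega), if_neg (by omega), ext_ge x (by omega), neg_zero]

lemma phi_snd (n t : ℕ) (ht : t ≤ n) (x : Fin (n + 1) → ℤ) :
    (phiE n t ht x).2
      = (if t = 0 then 0 else ext x (t - 1)) + ext x t + (if t < n then ext x (t + 1) else 0) := by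
  have h0 : (phiE n t ht x).2 = shearF n t ht x ⟨t, by omega⟩ := rfl
  rw [h0, shearF, Function.update_self, shearVal]
  simp only [ext]
  split_ifs <;> first | rfl | ring1 | omega | (exfalso; omega)

lemma psi_apply_lt (n : ℕ) (hn : 1 ≤ n) (p : (Fin n → ℤ) × ℤ) (i : ℕ) (h : i < n - 1) :
    psiE n hn p ⟨i, by omega⟩ = p.1 ⟨i, by omega⟩ := by
  have h0 : psiE n hn p = Fin.insertNth ⟨n - 1, by omega⟩ p.2 p.1 := rfl
  have h1 : (⟨i, by omega⟩ : Fin (n + 1))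
      = Fin.succAbove ⟨n - 1, by omega⟩ ⟨i, by omega⟩ := by
    rw [Fin.succAbove_of_castSucc_lt _ _ (by simp [Fin.lt_def]; omega)]
    exact Fin.ext (by simp)
  rw [h0, h1, Fin.insertNth_apply_succAbove]

lemma psi_apply_last (n : ℕ) (hn : 1 ≤ n) (p : (Fin n → ℤ) × ℤ) :
    psiE n hn p ⟨n - 1, by omega⟩ = p.2 := by
  have h0 : psiE n hn p = Fin.insertNth ⟨n - 1, by omega⟩ p.2 p.1 := rfl
  rw [h0, Fin.insertNth_apply_same]

lemma Wf_psi (n : ℕ) (hn : 1 ≤ n) (p q : (Fin n → ℤ) × ℤ) :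
    Wf (n + 1) (ext (psiE n hn p)) (ext (psiE n hn q))
      = Wf n (ext p.1) (ext q.1) + p.2 * q.2 := by
  obtain ⟨k, rfl⟩ : ∃ k, n = k + 1 := ⟨n - 1, by omega⟩
  unfold Wf
  rw [show k + 1 + 1 - 1 = k + 1 from rfl, show k + 1 - 1 = k from rfl,
    Finset.sum_range_succ]
  congr 1
  · apply Finset.sum_congr rfl
    intro i hi
    simp only [mem_range] at hi
    rw [ext_lt _ (show i < k + 1 + 1 by omega), ext_lt _ (show i < k + 1 + 1 by omega),
      ext_lt _ (show i < k + 1 by omega), ext_lt _ (show i < k + 1 by omega)]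
    have hp : psiE (k + 1) hn p ⟨i, by omega⟩ = p.1 ⟨i, by omega⟩ :=
      psi_apply_lt (k + 1) hn p i (by omega)
    have hq : psiE (k + 1) hn q ⟨i, by omega⟩ = q.1 ⟨i, by omega⟩ :=
      psi_apply_lt (k + 1) hn q i (by omega)
    rw [hp, hq]
  · rw [ext_lt _ (show k < k + 1 + 1 by omega), ext_lt _ (show k < k + 1 + 1 by omega)]
    have hp : psiE (k + 1) hn p ⟨k, by omega⟩ = p.2 := psi_apply_last (k + 1) hn p
    have hq : psiE (k + 1) hn q ⟨k, by omega⟩ = q.2 := psi_apply_last (k + 1) hn q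
    rw [hp, hq]



def castE {k k' : ℕ} (h : k = k') : (Fin k → ℤ) ≃+ (Fin k' → ℤ) :=
  AddEquiv.mk' (Equiv.arrowCongr (finCongr h) (Equiv.refl ℤ)) (fun _ _ => rfl)

lemma ext_castE {k k' : ℕ} (h : k = k') (x : Fin k → ℤ) : ext (castE h x) = ext x := by
  subst h; rfl

lemma Dl_cons_zero (c : ℤ) (L : List ℤ) : Dl (c :: L) 0 = c - 2 := by
  unfold Dl
  rw [dif_pos (by simp)]
  rfl

lemma Dl_cons (c : ℤ) (L : List ℤ) (j : ℕ) : Dl (c :: L) (j + 1) = Dl L j := by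
  unfold Dl
  by_cases h : j < L.length
  · rw [dif_pos (by simp; omega), dif_pos h]
    rfl
  · rw [dif_neg (by simp; omega), dif_neg h]

lemma Dl_append_left (L M : List ℤ) (j : ℕ) (h : j < L.length) :
    Dl (L ++ M) j = Dl L j := by
  unfold Dl
  rw [dif_pos (by simp; omega), dif_pos h]
  simp only [List.get_eq_getElem]
  rw [List.getElem_append_left h]

lemma Dl_append_right (L M : List ℤ) (j : ℕ) (h : L.length ≤ j) :
    Dl (L ++ M) j = Dl M (j - L.length) := by
  unfold Dl
  by_cases hj : j < L.length + M.length
  · rw [dif_pos (by simp; omega), dif_pos (by omega)]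
    simp only [List.get_eq_getElem]
    rw [List.getElem_append_right (by omega)]
  · rw [dif_neg (by simp; omega), dif_neg (by omega)]

lemma lift (m m' : List ℤ) (t : ℕ) (hlen : m'.length = m.length + 1)
    (hn : 1 ≤ m.length) (ht : t ≤ m.length)
    (h1 : Dl m' t = 1)
    (h2 : ∀ j, j + 1 < t → Dl m' j = Dl m j)
    (h3 : 0 < t → Dl m' (t - 1) = Dl m (t - 1) + 1)
    (h4 : t < m.length → Dl m' (t + 1) = Dl m t + 1)
    (h5 : ∀ j, t + 1 < j → j < m.length + 1 → Dl m' j = Dl m (j - 1))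
    (IH : ∃ e : (Fin m.length → ℤ) ≃+ (Fin m.length → ℤ),
      ∀ x y, WForm m.length (e x) (e y) = QForm m x y) :
    ∃ e : (Fin m'.length → ℤ) ≃+ (Fin m'.length → ℤ),
      ∀ x y, WForm m'.length (e x) (e y) = QForm m' x y := by
  obtain ⟨e, he⟩ := IH
  refine ⟨(castE hlen).trans ((phiE m.length t ht).trans
      ((AddEquiv.prodCongr e (AddEquiv.refl ℤ)).trans
        ((psiE m.length hn).trans (castE hlen.symm)))), ?_⟩
  intro x y
  rw [WForm_eq, QForm_eq]
  simp only [AddEquiv.trans_apply]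
  rw [ext_castE hlen.symm, ext_castE hlen.symm]
  have hWlen : ∀ A B : ℕ → ℤ, Wf m'.length A B = Wf (m.length + 1) A B := fun A B =>
    congrArg (fun k => Wf k A B) hlen
  have hQlen : Qf m'.length (Dl m') (ext x) (ext y)
      = Qf (m.length + 1) (Dl m') (ext x) (ext y) :=
    congrArg (fun k => Qf k (Dl m') (ext x) (ext y)) hlen
  rw [hWlen, hQlen]
  simp only [show ∀ p : (Fin m.length → ℤ) × ℤ,
      ((AddEquiv.prodCongr e (AddEquiv.refl ℤ)) p) = (e p.1, p.2) from fun _ => rfl]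
  rw [Wf_psi m.length hn]
  simp only
  have hW : ∀ u u' : Fin m.length → ℤ,
      Wf m.length (ext (e u)) (ext (e u')) = Qf m.length (Dl m) (ext u) (ext u') :=
    fun u u' => by rw [← WForm_eq, he, QForm_eq]
  rw [hW]
  rw [phi_fst_ext, phi_fst_ext, phi_snd, phi_snd]
  simp only [ext_castE hlen]
  exact (step m.length t hn ht (Dl m) (Dl m') (ext x) (ext y) h1 h2 h3 h4 h5).symm

end QIW

/-- for every admissible distance sequence `m`, the lattice `Q(m)` is
isometric to `W k`. -/
theorem Q_isometric_W (m : List ℤ) (hm : AdmSeq m) :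
    ∃ e : (Fin m.length → ℤ) ≃+ (Fin m.length → ℤ),
      ∀ x y : Fin m.length → ℤ, WForm m.length (e x) (e y) = QForm m x y := by
  induction hm with
  | base =>
    refine ⟨AddEquiv.refl _, ?_⟩
    intro x y
    simp [WForm, QForm, Fin.sum_univ_one]
  | left a l h ih =>
    refine QIW.lift (a :: l) (3 :: (a + 1) :: l) 0 rfl (by simp) (by omega) ?_ ?_ ?_ ?_ ?_ ih
    · rw [QIW.Dl_cons_zero]; norm_num
    · intro j hj; omega
    · intro hc; omega
    · intro _
      rw [show (1 : ℕ) = 0 + 1 from rfl, QIW.Dl_cons, QIW.Dl_cons_zero, QIW.Dl_cons_zero]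
      ring
    · intro j hj1 hj2
      obtain ⟨j', rfl⟩ : ∃ j', j = j' + 2 := ⟨j - 2, by omega⟩
      rw [show j' + 2 = (j' + 1) + 1 from rfl, QIW.Dl_cons, QIW.Dl_cons,
        show j' + 1 + 1 - 1 = j' + 1 from rfl, QIW.Dl_cons]
  | right l a h ih =>
    have hlen : (l ++ [a + 1, 3]).length = (l ++ [a]).length + 1 := by simp
    have hml : (l ++ [a]).length = l.length + 1 := by simp
    refine QIW.lift (l ++ [a]) (l ++ [a + 1, 3]) (l.length + 1) hlen (by simp) (by simp) ?_ ?_ ?_ ?_ ?_ ih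
    · rw [QIW.Dl_append_right _ _ _ (by omega), show l.length + 1 - l.length = 0 + 1 by omega,
        QIW.Dl_cons, QIW.Dl_cons_zero]
      ring
    · intro j hj
      rw [QIW.Dl_append_left _ _ _ (by omega), QIW.Dl_append_left _ _ _ (by omega)]
    · intro _
      rw [show l.length + 1 - 1 = l.length from rfl,
        QIW.Dl_append_right _ _ _ (by omega), QIW.Dl_append_right _ _ _ (by omega),
        Nat.sub_self, QIW.Dl_cons_zero, QIW.Dl_cons_zero]
      ring
    · intro hc; omega
    · intro j hj1 hj2; omega
  | mid l₁ a b l₂ h ih =>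
    have hlen : (l₁ ++ (a + 1) :: 3 :: (b + 1) :: l₂).length
        = (l₁ ++ a :: b :: l₂).length + 1 := by simp; omega
    have hml : (l₁ ++ a :: b :: l₂).length = l₁.length + 2 + l₂.length := by simp; omega
    refine QIW.lift (l₁ ++ a :: b :: l₂) (l₁ ++ (a + 1) :: 3 :: (b + 1) :: l₂)
      (l₁.length + 1) hlen (by simp; try omega) (by simp; try omega) ?_ ?_ ?_ ?_ ?_ ih
    · rw [QIW.Dl_append_right _ _ _ (by omega),
        show l₁.length + 1 - l₁.length = 0 + 1 by omega, QIW.Dl_cons, QIW.Dl_cons_zero]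
      ring
    · intro j hj
      rw [QIW.Dl_append_left _ _ _ (by omega), QIW.Dl_append_left _ _ _ (by omega)]
    · intro _
      rw [show l₁.length + 1 - 1 = l₁.length from rfl,
        QIW.Dl_append_right _ _ _ (by omega), QIW.Dl_append_right _ _ _ (by omega),
        Nat.sub_self, QIW.Dl_cons_zero, QIW.Dl_cons_zero]
      ring
    · intro _
      rw [show l₁.length + 1 + 1 = l₁.length + 2 by omega,
        QIW.Dl_append_right _ _ _ (by omega), QIW.Dl_append_right _ _ _ (by omega),
        show l₁.length + 2 - l₁.length = 1 + 1 by omega,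
        show l₁.length + 1 - l₁.length = 0 + 1 by omega,
        QIW.Dl_cons, QIW.Dl_cons, QIW.Dl_cons, QIW.Dl_cons_zero, QIW.Dl_cons_zero]
      ring
    · intro j hj1 hj2
      obtain ⟨j', rfl⟩ : ∃ j', j = l₁.length + 3 + j' := ⟨j - l₁.length - 3, by omega⟩
      rw [QIW.Dl_append_right _ _ _ (by omega), QIW.Dl_append_right _ _ _ (by omega),
        show l₁.length + 3 + j' - l₁.length = j' + 2 + 1 by omega,
        show l₁.length + 3 + j' - 1 - l₁.length = j' + 1 + 1 by omega,
        QIW.Dl_cons, QIW.Dl_cons, QIW.Dl_cons, QIW.Dl_cons, QIW.Dl_cons]
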